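/- Let K be a field of characteristic zero and Q(x,y) ∈ K[x_1,...,x_r, y] a polynomial (no negative exponents) with Q(x,0) ≢ 0 and all monomials x^i y^j of Q satisfying i >_grlex 0. Let y_0 = Σ_{n >_grlex 0} c_n x^n ∈ K[[x_1,...,x_r]] be the unique solution of y = Q(x,y). Then for every n ∈ ℕ^r, the coefficient c_n is given by the multivariate Flajolet–Soria formula: c_n = Σ_{m=1}^{μ_n} (1/m) Σ_{|M| = m, ‖M‖ = m−1, G(M) = n} (m!/M!) · A^M, where the inner sum is over tuples M = (m_{i,j}) of natural numbers indexed by the monomials of Q, A^M := ∏_{i,j} a_{i,j}^{m_{i,j}}, |M| := Σ m_{i,j}, ‖M‖ := Σ m_{i,j}·j, G(M) := Σ m_{i,j}·i, and μ_n ≤ 2|n| − n_r. -/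

import Mathlib

open Finset MvPowerSeries

namespace FSAux

variable {r : ℕ}

abbrev Idx (r : ℕ) := (Fin r →₀ ℕ) × ℕ

/-- total degree `|M|` -/
def deg (M : Idx r →₀ ℕ) : ℕ := M.sum fun _ v => v
/-- weighted degree `‖M‖` -/
def wdeg (M : Idx r →₀ ℕ) : ℕ := M.sum fun p v => v * p.2
/-- exponent sum `G(M)` -/
noncomputable def gdeg (M : Idx r →₀ ℕ) : Fin r →₀ ℕ := M.sum fun p v => v • p.1
/-- `|n|` for an exponent -/
def nsum (n : Fin r →₀ ℕ) : ℕ := n.sum fun _ v => v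

lemma nsum_eq (n : Fin r →₀ ℕ) : nsum n = ∑ i, n i :=
  Finsupp.sum_fintype _ _ (fun _ => rfl)

lemma deg_add (M N : Idx r →₀ ℕ) : deg (M + N) = deg M + deg N :=
  Finsupp.sum_add_index' (fun _ => rfl) (fun _ _ _ => rfl)

lemma wdeg_add (M N : Idx r →₀ ℕ) : wdeg (M + N) = wdeg M + wdeg N :=
  Finsupp.sum_add_index' (fun p => zero_mul p.2) (fun p b₁ b₂ => add_mul b₁ b₂ p.2)

lemma gdeg_add (M N : Idx r →₀ ℕ) : gdeg (M + N) = gdeg M + gdeg N :=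
  Finsupp.sum_add_index' (fun p => zero_smul ℕ p.1) (fun p b₁ b₂ => add_smul b₁ b₂ p.1)

lemma deg_single (p : Idx r) (c : ℕ) : deg (Finsupp.single p c) = c :=
  Finsupp.sum_single_index rfl

lemma wdeg_single (p : Idx r) (c : ℕ) : wdeg (Finsupp.single p c) = c * p.2 :=
  Finsupp.sum_single_index (zero_mul p.2)

lemma gdeg_single (p : Idx r) (c : ℕ) : gdeg (Finsupp.single p c) = c • p.1 :=
  Finsupp.sum_single_index (zero_smul ℕ p.1)

lemma nsum_add (x y : Fin r →₀ ℕ) : nsum (x + y) = nsum x + nsum y := by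
  simp [nsum_eq, Finsupp.add_apply, Finset.sum_add_distrib]

lemma nsum_eq_zero {x : Fin r →₀ ℕ} (h : nsum x = 0) : x = 0 := by
  rw [nsum_eq] at h
  ext i
  exact (Finset.sum_eq_zero_iff.mp h) i (mem_univ i)

lemma nsum_pos {x : Fin r →₀ ℕ} (h : x ≠ 0) : 1 ≤ nsum x :=
  Nat.one_le_iff_ne_zero.2 fun h0 => h (nsum_eq_zero h0)

lemma nsum_smul (c : ℕ) (x : Fin r →₀ ℕ) : nsum (c • x) = c * nsum x := by
  simp [nsum_eq, Finset.mul_sum]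


/-- `nsum` as an additive hom -/
noncomputable def nsumHom : (Fin r →₀ ℕ) →+ ℕ where
  toFun := nsum
  map_zero' := by simp [nsum]
  map_add' := nsum_add

lemma gdeg_eq (M : Idx r →₀ ℕ) : gdeg M = ∑ p ∈ M.support, (M p) • p.1 := rfl

lemma deg_eq (M : Idx r →₀ ℕ) : deg M = ∑ p ∈ M.support, M p := rfl

lemma wdeg_eq (M : Idx r →₀ ℕ) : wdeg M = ∑ p ∈ M.support, M p * p.2 := rfl

/-- key finiteness bound: `|M| ≤ |G(M)|` when all exponents are nonzero. -/
lemma deg_le_nsum_gdeg {s : Finset (Idx r)} (hpos : ∀ p ∈ s, p.1 ≠ 0)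
    {M : Idx r →₀ ℕ} (hs : M.support ⊆ s) : deg M ≤ nsum (gdeg M) := by
  rw [deg_eq, gdeg_eq, show nsum (∑ p ∈ M.support, (M p) • p.1)
      = ∑ p ∈ M.support, nsum ((M p) • p.1) from map_sum nsumHom _ _]
  refine Finset.sum_le_sum fun p hp => ?_
  rw [nsum_smul]
  exact Nat.le_mul_of_pos_right _ (nsum_pos (hpos p (hs hp)))

lemma single_le_of_mem_support {M : Idx r →₀ ℕ} {p : Idx r} (hp : p ∈ M.support) :
    Finsupp.single p 1 ≤ M :=
  Finsupp.single_le_iff.2 (Nat.one_le_iff_ne_zero.2 (Finsupp.mem_support_iff.1 hp))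

lemma fst_le_gdeg {M : Idx r →₀ ℕ} {p : Idx r} (hp : p ∈ M.support) : p.1 ≤ gdeg M := by
  rw [gdeg_eq]
  calc p.1 = 1 • p.1 := (one_smul _ _).symm
    _ ≤ (M p) • p.1 := by
        have := Finsupp.mem_support_iff.1 hp
        exact nsmul_le_nsmul_left zero_le (Nat.one_le_iff_ne_zero.2 this) |>.trans_eq rfl
    _ ≤ ∑ q ∈ M.support, (M q) • q.1 :=
        Finset.single_le_sum (f := fun q => (M q) • q.1) (fun _ _ => zero_le) hp


/-- `M!` -/
def Mfact (M : Idx r →₀ ℕ) : ℕ := M.prod fun _ v => v.factorial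

/-- `A^M` -/
def AM {K : Type*} [CommSemiring K] (a : Idx r → K) (M : Idx r →₀ ℕ) : K :=
  M.prod fun p v => a p ^ v

lemma Mfact_pos (M : Idx r →₀ ℕ) : 0 < Mfact M :=
  Finset.prod_pos fun p _ => Nat.factorial_pos (M p)

lemma AM_add {K : Type*} [CommSemiring K] (a : Idx r → K) (M N : Idx r →₀ ℕ) :
    AM a (M + N) = AM a M * AM a N :=
  Finsupp.prod_add_index' (fun p => pow_zero (a p)) (fun p b₁ b₂ => pow_add (a p) b₁ b₂)

lemma AM_single {K : Type*} [CommSemiring K] (a : Idx r → K) (p : Idx r) (c : ℕ) :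
    AM a (Finsupp.single p c) = a p ^ c :=
  Finsupp.prod_single_index (pow_zero (a p))

lemma Mfact_add_single (M : Idx r →₀ ℕ) (p : Idx r) :
    Mfact (M + Finsupp.single p 1) = Mfact M * (M p + 1) := by
  classical
  have hsub1 : (M + Finsupp.single p 1).support ⊆ insert p M.support := by
    refine Finsupp.support_add.trans ?_
    rw [Finset.union_comm]
    exact Finset.union_subset_union (Finsupp.support_single_subset) le_rfl
  have hsub2 : M.support ⊆ insert p M.support := Finset.subset_insert _ _
  rw [Mfact, Mfact,
    Finsupp.prod_of_support_subset _ hsub1 _ (fun q _ => Nat.factorial_zero),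
    Finsupp.prod_of_support_subset _ hsub2 _ (fun q _ => Nat.factorial_zero)]
  have hp : p ∈ insert p M.support := Finset.mem_insert_self _ _
  rw [← Finset.prod_erase_mul _ _ hp, ← Finset.prod_erase_mul _ _ hp]
  have h1 : ∀ q ∈ (insert p M.support).erase p,
      ((M + Finsupp.single p 1 : Idx r →₀ ℕ) q).factorial = (M q).factorial := by
    intro q hq
    have hqp : q ≠ p := Finset.ne_of_mem_erase hq
    simp [Finsupp.single_apply, hqp.symm, Finsupp.add_apply]
  rw [Finset.prod_congr rfl h1]
  have h2 : (M + Finsupp.single p 1 : Idx r →₀ ℕ) p = M p + 1 := by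
    simp [Finsupp.add_apply, Finsupp.single_apply]
  rw [h2, Nat.factorial_succ]
  ring


variable {K : Type*} [Field K] [CharZero K]

/-- the (finite) index set of the inner sum: forests with `k` trees -/
noncomputable def TT (s : Finset (Idx r)) (k : ℕ) (n : Fin r →₀ ℕ) :
    Finset ((Idx r) →₀ ℕ) := by
  classical
  exact (Finset.Iic (∑ p ∈ s, Finsupp.single p (nsum n))).filter
    (fun M => M.support ⊆ s ∧ deg M = wdeg M + k ∧ gdeg M = n)

lemma mem_TT {s : Finset (Idx r)} (hpos : ∀ p ∈ s, p.1 ≠ 0) {k : ℕ} {n : Fin r →₀ ℕ}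
    {M : (Idx r) →₀ ℕ} :
    M ∈ TT s k n ↔ M.support ⊆ s ∧ deg M = wdeg M + k ∧ gdeg M = n := by
  classical
  simp only [TT, Finset.mem_filter, Finset.mem_Iic]
  refine ⟨fun h => h.2, fun h => ⟨?_, h⟩⟩
  obtain ⟨hs, hdw, hg⟩ := h
  intro q
  rw [Finsupp.finset_sum_apply]
  by_cases hq : q ∈ M.support
  · have hqs : q ∈ s := hs hq
    have : ∑ p ∈ s, (Finsupp.single p (nsum n) : Idx r →₀ ℕ) q = nsum n := by
      rw [Finset.sum_eq_single_of_mem q hqs]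
      · simp [Finsupp.single_apply]
      · intro b _ hbq
        simp [Finsupp.single_apply, hbq]
    rw [this]
    calc M q ≤ deg M := by
          rw [deg_eq]
          exact Finset.single_le_sum (f := fun p => M p) (fun _ _ => zero_le) hq
      _ ≤ nsum (gdeg M) := deg_le_nsum_gdeg hpos hs
      _ = nsum n := by rw [hg]
  · have : M q = 0 := Finsupp.notMem_support_iff.1 hq
    simp [this]


/-- the weight `k·(|M|-1)!/M!` -/
noncomputable def W (K : Type*) [Field K] (k : ℕ) (M : Idx r →₀ ℕ) : K :=
  (k : K) * ((deg M - 1).factorial : K) / (Mfact M : K)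

lemma Mfact_single (p : Idx r) (c : ℕ) : Mfact (Finsupp.single p c) = c.factorial :=
  Finsupp.prod_single_index Nat.factorial_zero

lemma eq_single_of_deg_one {M : Idx r →₀ ℕ} (h : deg M = 1) :
    ∃ q ∈ M.support, M = Finsupp.single q 1 := by
  classical
  have hne : M.support.Nonempty := by
    rw [Finsupp.support_nonempty_iff]
    rintro rfl
    simp [deg] at h
  obtain ⟨q, hq⟩ := hne
  refine ⟨q, hq, ?_⟩
  have hq1 : 1 ≤ M q := Nat.one_le_iff_ne_zero.2 (Finsupp.mem_support_iff.1 hq)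
  have hle : ∀ q' ∈ M.support, q' ≠ q → M q' = 0 := by
    intro q' hq' hne'
    by_contra hcon
    have h2 : M q + M q' ≤ deg M := by
      rw [deg_eq, ← Finset.sum_pair hne'.symm]
      exact Finset.sum_le_sum_of_subset (by
        intro x hx
        rcases Finset.mem_insert.1 hx with rfl | hx
        · exact hq
        · rwa [Finset.mem_singleton.1 hx])
    omega
  have hMq : M q = 1 := by
    have h2 : M q ≤ deg M := by
      rw [deg_eq]
      exact Finset.single_le_sum (f := fun p => M p) (fun _ _ => zero_le) hq
    omega
  ext q'
  rcases eq_or_ne q' q with rfl | hne'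
  · simp [hMq, Finsupp.single_apply]
  · rw [Finsupp.single_apply, if_neg (by exact fun h' => hne' h'.symm)]
    by_cases hq' : q' ∈ M.support
    · exact hle q' hq' hne'
    · exact Finsupp.notMem_support_iff.1 hq'

/-- decomposition facts when removing one unit at `p ∈ supp M`. -/
lemma sub_single_facts {M : Idx r →₀ ℕ} {p : Idx r} (hp : p ∈ M.support) :
    (M - Finsupp.single p 1) + Finsupp.single p 1 = M :=
  tsub_add_cancel_of_le (single_le_of_mem_support hp)

/-- **core numeric identity** (the Lagrange-inversion step). -/
lemma NC (K : Type*) [Field K] [CharZero K] (a : Idx r → K) {M : Idx r →₀ ℕ} {k' : ℕ}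
    (hdw : deg M = wdeg M + (k' + 1)) (h2 : 2 ≤ deg M) :
    ∑ p ∈ M.support,
        a p * (W K (p.2 + k') (M - Finsupp.single p 1) * AM a (M - Finsupp.single p 1))
      = W K (k' + 1) M * AM a M := by
  classical
  have hMf : (Mfact M : K) ≠ 0 := Nat.cast_ne_zero.2 (Mfact_pos M).ne'
  have hterm : ∀ p ∈ M.support,
      a p * (W K (p.2 + k') (M - Finsupp.single p 1) * AM a (M - Finsupp.single p 1))
        = (((p.2 + k') * M p * (deg M - 2).factorial : ℕ) : K) / (Mfact M : K) * AM a M := by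
    intro p hp
    set M' := M - Finsupp.single p 1 with hM'
    have hMeq : M' + Finsupp.single p 1 = M := sub_single_facts hp
    have hdeg : deg M = deg M' + 1 := by rw [← hMeq, deg_add, deg_single]
    have hMp : M p = M' p + 1 := by
      conv_lhs => rw [← hMeq]
      simp [Finsupp.add_apply, Finsupp.single_apply]
    have hfact : Mfact M = Mfact M' * M p := by
      conv_lhs => rw [← hMeq]
      rw [Mfact_add_single, ← hMp]
    have hAM : AM a M = AM a M' * a p := by rw [← hMeq, AM_add, AM_single, pow_one]
    have hdeg2 : deg M' - 1 = deg M - 2 := by omega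
    have hM'f : (Mfact M' : K) ≠ 0 := Nat.cast_ne_zero.2 (Mfact_pos M').ne'
    have hMpne : (M p : K) ≠ 0 :=
      Nat.cast_ne_zero.2 (Finsupp.mem_support_iff.1 hp)
    rw [W, hAM, hdeg2, hfact]
    push_cast
    field_simp
  rw [Finset.sum_congr rfl hterm, ← Finset.sum_mul, ← Finset.sum_div, ← Nat.cast_sum]
  have hsum : ∑ p ∈ M.support, (p.2 + k') * M p * (deg M - 2).factorial
      = (k' + 1) * (deg M - 1).factorial := by
    rw [← Finset.sum_mul]
    have h1 : ∑ p ∈ M.support, (p.2 + k') * M p = (k' + 1) * (deg M - 1) := by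
      have hx : ∑ p ∈ M.support, (p.2 + k') * M p = wdeg M + k' * deg M := by
        simp only [add_mul]
        rw [Finset.sum_add_distrib, wdeg_eq, deg_eq, ← Finset.mul_sum]
        congr 1
        exact Finset.sum_congr rfl fun p _ => mul_comm _ _
      rw [hx]
      have hw : deg M - 1 = wdeg M + k' := by omega
      rw [hw, hdw]
      ring
    rw [h1, mul_assoc]
    congr 1
    have h3 : 0 < deg M - 1 := by omega
    have h4 : deg M - 1 - 1 = deg M - 2 := by omega
    rw [← h4, Nat.mul_factorial_pred h3.ne']
  rw [hsum, W]
  push_cast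
  ring


lemma S2eq (K : Type*) [Field K] [CharZero K] (a : Idx r → K) {s : Finset (Idx r)}
    (hpos : ∀ p ∈ s, p.1 ≠ 0) (n : Fin r →₀ ℕ) (k' : ℕ) :
    ∑ p ∈ s.filter (fun p => p.1 = n ∧ p.2 + k' = 0), a p
      = ∑ M ∈ (TT s (k' + 1) n).filter (fun M => deg M = 1), W K (k' + 1) M * AM a M := by
  classical
  refine Finset.sum_nbij' (i := fun p => Finsupp.single p 1)
    (j := fun M => (gdeg M, wdeg M)) ?_ ?_ ?_ ?_ ?_
  · intro p hp
    rw [Finset.mem_filter] at hp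
    obtain ⟨hps, hp1, hp2⟩ := hp
    have hk0 : k' = 0 := by omega
    have hp20 : p.2 = 0 := by omega
    rw [Finset.mem_filter, mem_TT hpos]
    refine ⟨⟨?_, ?_, ?_⟩, deg_single p 1⟩
    · exact Finsupp.support_single_subset.trans (by simpa using hps)
    · rw [deg_single, wdeg_single, hp20, hk0]
    · rw [gdeg_single, one_smul, hp1]
  · intro M hM
    rw [Finset.mem_filter, mem_TT hpos] at hM
    obtain ⟨⟨hsup, hdw, hg⟩, hdeg1⟩ := hM
    obtain ⟨q, hq, rfl⟩ := eq_single_of_deg_one hdeg1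
    rw [deg_single, wdeg_single, one_mul] at hdw
    rw [gdeg_single, one_smul] at hg
    have hqs : q ∈ s := hsup hq
    rw [Finset.mem_filter, gdeg_single, one_smul, wdeg_single, one_mul]
    exact ⟨hqs, hg, by omega⟩
  · intro p hp
    rw [gdeg_single, one_smul, wdeg_single, one_mul]
  · intro M hM
    rw [Finset.mem_filter, mem_TT hpos] at hM
    obtain ⟨⟨hsup, hdw, hg⟩, hdeg1⟩ := hM
    obtain ⟨q, hq, rfl⟩ := eq_single_of_deg_one hdeg1
    rw [gdeg_single, one_smul, wdeg_single, one_mul]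
  · intro p hp
    rw [Finset.mem_filter] at hp
    obtain ⟨hps, hp1, hp2⟩ := hp
    have hk0 : k' = 0 := by omega
    rw [W, deg_single, Mfact_single, AM_single, pow_one, hk0]
    norm_num

lemma S1eq (K : Type*) [Field K] [CharZero K] (a : Idx r → K) {s : Finset (Idx r)}
    (hpos : ∀ p ∈ s, p.1 ≠ 0) (n : Fin r →₀ ℕ) (k' : ℕ) :
    ∑ p ∈ s.filter (fun p => p.1 ≤ n ∧ 1 ≤ p.2 + k'),
        a p * ∑ M' ∈ TT s (p.2 + k') (n - p.1), W K (p.2 + k') M' * AM a M'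
      = ∑ M ∈ (TT s (k' + 1) n).filter (fun M => 2 ≤ deg M), W K (k' + 1) M * AM a M := by
  classical
  have hRHS : ∀ M ∈ (TT s (k' + 1) n).filter (fun M => 2 ≤ deg M),
      W K (k' + 1) M * AM a M
        = ∑ p ∈ M.support.filter (fun p => 1 ≤ p.2 + k'),
            a p * (W K (p.2 + k') (M - Finsupp.single p 1)
              * AM a (M - Finsupp.single p 1)) := by
    intro M hM
    rw [Finset.mem_filter, mem_TT hpos] at hM
    obtain ⟨⟨hsup, hdw, hg⟩, h2⟩ := hM
    rw [Finset.sum_filter_of_ne fun p hp hne => ?_, NC K a hdw h2]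
    by_contra h0
    have hz : p.2 + k' = 0 := by omega
    apply hne
    rw [hz]
    simp [W]
  rw [Finset.sum_congr rfl hRHS]
  have hLHS : ∀ p ∈ s.filter (fun p => p.1 ≤ n ∧ 1 ≤ p.2 + k'),
      a p * ∑ M' ∈ TT s (p.2 + k') (n - p.1), W K (p.2 + k') M' * AM a M'
        = ∑ M' ∈ TT s (p.2 + k') (n - p.1), a p * (W K (p.2 + k') M' * AM a M') := by
    intro p hp
    rw [Finset.mul_sum]
  rw [Finset.sum_congr rfl hLHS, Finset.sum_sigma', Finset.sum_sigma']
  refine Finset.sum_nbij' (i := fun x => ⟨x.2 + Finsupp.single x.1 1, x.1⟩)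
    (j := fun y => ⟨y.2, y.1 - Finsupp.single y.2 1⟩) ?_ ?_ ?_ ?_ ?_
  · rintro ⟨p, M'⟩ hx
    rw [Finset.mem_sigma, Finset.mem_filter] at hx
    obtain ⟨⟨hps, hple, hk1⟩, hM'⟩ := hx
    rw [mem_TT hpos] at hM'
    dsimp only at hps hple hk1 hM' ⊢
    obtain ⟨hsup', hdw', hg'⟩ := hM'
    have hdegs : deg (M' + Finsupp.single p 1) = deg M' + 1 := by
      rw [deg_add, deg_single]
    rw [Finset.mem_sigma, Finset.mem_filter, Finset.mem_filter, mem_TT hpos]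
    dsimp only
    refine ⟨⟨⟨?_, ?_, ?_⟩, ?_⟩, ?_, hk1⟩
    · refine Finsupp.support_add.trans (Finset.union_subset hsup' ?_)
      exact Finsupp.support_single_subset.trans (by simpa using hps)
    · rw [hdegs, wdeg_add, wdeg_single, one_mul, hdw']
      omega
    · rw [gdeg_add, gdeg_single, one_smul, hg', tsub_add_cancel_of_le hple]
    · rw [hdegs]
      omega
    · rw [Finsupp.mem_support_iff]
      simp [Finsupp.add_apply, Finsupp.single_apply]
  · rintro ⟨M, p⟩ hy
    rw [Finset.mem_sigma, Finset.mem_filter, Finset.mem_filter, mem_TT hpos] at hy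
    obtain ⟨⟨⟨hsup, hdw, hg⟩, h2⟩, hpsup, hk1⟩ := hy
    dsimp only at hsup hdw hg h2 hpsup hk1 ⊢
    have hMeq : (M - Finsupp.single p 1) + Finsupp.single p 1 = M := sub_single_facts hpsup
    have hdeg : deg M = deg (M - Finsupp.single p 1) + 1 := by
      conv_lhs => rw [← hMeq]
      rw [deg_add, deg_single]
    have hwdeg : wdeg M = wdeg (M - Finsupp.single p 1) + p.2 := by
      conv_lhs => rw [← hMeq]
      rw [wdeg_add, wdeg_single, one_mul]
    have hgdeg : gdeg M = gdeg (M - Finsupp.single p 1) + p.1 := by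
      conv_lhs => rw [← hMeq]
      rw [gdeg_add, gdeg_single, one_smul]
    rw [Finset.mem_sigma, Finset.mem_filter, mem_TT hpos]
    dsimp only
    refine ⟨⟨hsup hpsup, ?_, hk1⟩, ?_, ?_, ?_⟩
    · rw [← hg]
      exact fst_le_gdeg hpsup
    · intro q hq
      apply hsup
      rw [Finsupp.mem_support_iff] at hq ⊢
      rw [Finsupp.tsub_apply] at hq
      intro h0
      rw [h0] at hq
      simp at hq
    · omega
    · rw [← hg, hgdeg, add_tsub_cancel_right]
  · rintro ⟨p, M'⟩ hx
    simp [add_tsub_cancel_right]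
  · rintro ⟨M, p⟩ hy
    rw [Finset.mem_sigma, Finset.mem_filter, Finset.mem_filter, mem_TT hpos] at hy
    obtain ⟨⟨⟨hsup, hdw, hg⟩, h2⟩, hpsup, hk1⟩ := hy
    have hMeq := sub_single_facts hpsup
    simp only [hMeq]
  · rintro ⟨p, M'⟩ hx
    simp [add_tsub_cancel_right]


theorem key {K : Type*} [Field K] [CharZero K] {s : Finset (Idx r)}
    (hpos : ∀ p ∈ s, p.1 ≠ 0) (a : Idx r → K) (y0 : MvPowerSeries (Fin r) K)
    (heq : y0 = ∑ p ∈ s, (monomial p.1 (a p)) * y0 ^ p.2) :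
    ∀ (d : ℕ) (n : Fin r →₀ ℕ), nsum n = d → ∀ k' : ℕ,
      coeff n (y0 ^ (k' + 1)) = ∑ M ∈ TT s (k' + 1) n, W K (k' + 1) M * AM a M := by
  classical
  intro d
  induction d using Nat.strong_induction_on with
  | _ d IH =>
  intro n hd k'
  have step1 : coeff n (y0 ^ (k' + 1))
      = ∑ p ∈ s, (if p.1 ≤ n then a p * coeff (n - p.1) (y0 ^ (p.2 + k')) else 0) := by
    conv_lhs => rw [pow_succ]
    nth_rewrite 2 [heq]
    rw [Finset.mul_sum, map_sum]
    refine Finset.sum_congr rfl fun p hp => ?_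
    rw [show y0 ^ k' * (monomial p.1 (a p) * y0 ^ p.2)
        = monomial p.1 (a p) * y0 ^ (p.2 + k') by rw [pow_add]; ring]
    exact coeff_monomial_mul n p.1 (y0 ^ (p.2 + k')) (a p)
  rw [step1, ← Finset.sum_filter_add_sum_filter_not s (fun p => p.1 ≤ n ∧ 1 ≤ p.2 + k')]
  have hpart1 : ∑ p ∈ s.filter (fun p => p.1 ≤ n ∧ 1 ≤ p.2 + k'),
        (if p.1 ≤ n then a p * coeff (n - p.1) (y0 ^ (p.2 + k')) else 0)
      = ∑ p ∈ s.filter (fun p => p.1 ≤ n ∧ 1 ≤ p.2 + k'),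
          a p * ∑ M' ∈ TT s (p.2 + k') (n - p.1), W K (p.2 + k') M' * AM a M' := by
    refine Finset.sum_congr rfl fun p hp => ?_
    rw [Finset.mem_filter] at hp
    obtain ⟨hps, hple, hk1⟩ := hp
    rw [if_pos hple]
    congr 1
    have hppos : p.1 ≠ 0 := hpos p hps
    have hlt : nsum (n - p.1) < d := by
      have hnn : (n - p.1) + p.1 = n := tsub_add_cancel_of_le hple
      have h2 := nsum_add (n - p.1) p.1
      rw [hnn] at h2
      have h1 := nsum_pos hppos
      omega
    obtain ⟨j, hj⟩ : ∃ j, p.2 + k' = j + 1 := ⟨p.2 + k' - 1, by omega⟩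
    rw [hj]
    exact IH _ hlt (n - p.1) rfl j
  have hpart2 : ∑ p ∈ s.filter (fun p => ¬(p.1 ≤ n ∧ 1 ≤ p.2 + k')),
        (if p.1 ≤ n then a p * coeff (n - p.1) (y0 ^ (p.2 + k')) else 0)
      = ∑ p ∈ s.filter (fun p => p.1 = n ∧ p.2 + k' = 0), a p := by
    rw [Finset.sum_congr rfl
      (g := fun p => if p.1 = n ∧ p.2 + k' = 0 then a p else 0) ?_]
    · rw [← Finset.sum_filter, Finset.filter_filter]
      refine Finset.sum_congr (Finset.filter_congr fun p hp => ?_) fun _ _ => rfl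
      constructor
      · rintro ⟨-, h⟩
        exact h
      · rintro ⟨h1, h2⟩
        exact ⟨fun hh => by have := hh.2; omega, h1, h2⟩
    · intro p hp
      rw [Finset.mem_filter] at hp
      obtain ⟨hps, hnp⟩ := hp
      by_cases hle : p.1 ≤ n
      · have hk0 : p.2 + k' = 0 := by
          push_neg at hnp
          have := hnp hle
          omega
        rw [if_pos hle, hk0, pow_zero, coeff_one]
        by_cases hpn : p.1 = n
        · rw [if_pos (by rw [hpn, tsub_self] : n - p.1 = 0), if_pos ⟨hpn, rfl⟩, mul_one]
        · rw [if_neg ?_, if_neg (by rintro ⟨h, -⟩; exact hpn h), mul_zero]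
          intro h0
          apply hpn
          have := tsub_eq_zero_iff_le.1 h0
          exact le_antisymm hle this
      · rw [if_neg hle, if_neg (by rintro ⟨rfl, -⟩; exact hle le_rfl)]
  rw [hpart1, hpart2, S1eq K a hpos n k', S2eq K a hpos n k',
    ← Finset.sum_filter_add_sum_filter_not (TT s (k' + 1) n) (fun M => 2 ≤ deg M)]
  congr 1
  refine Finset.sum_congr (Finset.filter_congr fun M hM => ?_) fun _ _ => rfl
  rw [mem_TT hpos] at hM
  obtain ⟨-, hdw, -⟩ := hM
  constructor <;> omega

end FSAux


/-- **Multivariate Flajolet–Soria formula (polynomial case).**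
Let `K` be a field of characteristic zero and `Q(x,y) = Σ_{(i,j) ∈ s} a_{i,j} x^i y^j` a
polynomial (no negative exponents) with `Q(x,0) ≢ 0` and every exponent `i` nonzero
(i.e. `i >_grlex 0`).  Let `y₀ ∈ K[[x₁,…,x_r]]` be the unique solution of `y = Q(x,y)`
with zero constant term.  Then for every `n`, writing `|M| = Σ m_{i,j}`,
`‖M‖ = Σ m_{i,j}·j`, `G(M) = Σ m_{i,j}·i` and `A^M = Π a_{i,j}^{m_{i,j}}`,
`c_n = Σ_{m=1}^{μ_n} (1/m) Σ_{|M|=m, ‖M‖=m-1, G(M)=n} (m!/M!)·A^M`,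
where `μ_n ≤ 2|n| - n_r` (so the outer sum may be taken up to `2|n| - n_r`). -/
theorem multivariate_flajolet_soria (K : Type*) [Field K] [CharZero K]
    (r : ℕ) (hr : 0 < r)
    (s : Finset ((Fin r →₀ ℕ) × ℕ)) (a : (Fin r →₀ ℕ) × ℕ → K)
    (hpos : ∀ p ∈ s, p.1 ≠ 0)
    (hQ0 : ∃ i : Fin r →₀ ℕ, (i, 0) ∈ s ∧ a (i, 0) ≠ 0)
    (y0 : MvPowerSeries (Fin r) K)
    (h00 : MvPowerSeries.constantCoeff y0 = 0)
    (heq : y0 = ∑ p ∈ s, (MvPowerSeries.monomial p.1 (a p)) * y0 ^ p.2)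
    (n : Fin r →₀ ℕ) (hn : n ≠ 0) :
    MvPowerSeries.coeff n y0 =
      ∑ m ∈ Finset.Icc 1 (2 * (∑ i, n i) - n ⟨r - 1, Nat.sub_lt hr one_pos⟩),
        (1 / (m : K)) *
          ∑ᶠ (M : ((Fin r →₀ ℕ) × ℕ) →₀ ℕ)
            (_ : ↑M.support ⊆ (s : Set ((Fin r →₀ ℕ) × ℕ)) ∧
              (M.sum fun _ v => v) = m ∧
              (M.sum fun p v => v * p.2) = m - 1 ∧
              (M.sum fun p v => v • p.1) = n),
            ((m.factorial : K) / (M.prod fun _ v => (v.factorial : K))) *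
              (M.prod fun p v => a p ^ v) := by
  classical
  have hkey := FSAux.key hpos a y0 heq (FSAux.nsum n) n rfl 0
  simp only [zero_add, pow_one] at hkey
  have hmap : ∀ M ∈ FSAux.TT s 1 n, FSAux.deg M ∈
      Finset.Icc 1 (2 * (∑ i, n i) - n ⟨r - 1, Nat.sub_lt hr one_pos⟩) := by
    intro M hM
    rw [FSAux.mem_TT hpos] at hM
    obtain ⟨hsup, hdw, hg⟩ := hM
    have h1 : FSAux.deg M ≤ FSAux.nsum n := by
      have := FSAux.deg_le_nsum_gdeg hpos hsup
      rwa [hg] at this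
    have h2 : FSAux.nsum n = ∑ i, n i := FSAux.nsum_eq n
    have h3 : n ⟨r - 1, Nat.sub_lt hr one_pos⟩ ≤ ∑ i, n i :=
      Finset.single_le_sum (f := fun i => n i) (fun _ _ => zero_le) (Finset.mem_univ _)
    rw [Finset.mem_Icc]
    omega
  rw [hkey, ← Finset.sum_fiberwise_of_maps_to hmap (fun M => FSAux.W K 1 M * FSAux.AM a M)]
  refine Finset.sum_congr rfl fun m hm => ?_
  rw [Finset.mem_Icc] at hm
  have hiff : ∀ M : ((Fin r →₀ ℕ) × ℕ) →₀ ℕ,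
      (↑M.support ⊆ (s : Set ((Fin r →₀ ℕ) × ℕ)) ∧
        (M.sum fun _ v => v) = m ∧
        (M.sum fun p v => v * p.2) = m - 1 ∧
        (M.sum fun p v => v • p.1) = n)
      ↔ M ∈ (FSAux.TT s 1 n).filter (fun M => FSAux.deg M = m) := by
    intro M
    rw [Finset.mem_filter, FSAux.mem_TT hpos]
    constructor
    · rintro ⟨h1, h2, h3, h4⟩
      have h1' : M.support ⊆ s := Finset.coe_subset.1 h1
      have h2' : FSAux.deg M = m := h2
      have h3' : FSAux.wdeg M = m - 1 := h3
      exact ⟨⟨h1', by omega, h4⟩, h2'⟩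
    · rintro ⟨⟨h1, h2, h3⟩, h4⟩
      refine ⟨Finset.coe_subset.2 h1, h4, ?_, h3⟩
      show FSAux.wdeg M = m - 1
      omega
  rw [finsum_cond_eq_sum_of_cond_iff _ (fun {M} _ => hiff M), Finset.mul_sum]
  refine Finset.sum_congr rfl fun M hM => ?_
  rw [Finset.mem_filter] at hM
  obtain ⟨hMT, hdm⟩ := hM
  rw [FSAux.mem_TT hpos] at hMT
  have hm1 : 1 ≤ m := hm.1
  have hfK : (M.prod fun _ v => (v.factorial : K)) = ((FSAux.Mfact M : ℕ) : K) := by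
    rw [FSAux.Mfact, Finsupp.prod, Finsupp.prod, Nat.cast_prod]
  have hmK : (m : K) ≠ 0 := Nat.cast_ne_zero.2 (by omega)
  have hfact : (m.factorial : K) = (m : K) * ((m - 1).factorial : K) := by
    rw [← Nat.cast_mul, Nat.mul_factorial_pred (by omega)]
  rw [FSAux.W, FSAux.AM, hdm, hfK, hfact]
  field_simp
  rw [Nat.cast_one, one_mul]
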